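/- The EXP4 algorithm run on a fixed policy set Θ of N distributions over a finite outcome set, with learning rates η_t = min{1, √(log N / (e C(Θ) t))}, satisfies the regret bound R_T ≤ 2 max{√(e C(Θ) T log N), log N} against any adversarial sequence of losses in [0,1]. -/

import Mathlib

open Finset

noncomputable section

/-- Cumulative importance-weighted loss estimates of EXP4 (0-indexed rounds):
`exp4Lhat θ ℓ η x t i = ∑_{s<t} ℓ̂_s(i)` where
`ℓ̂_s(i) = θ i (x s) · ℓ s (x s) / ∑_j p_s(j) θ j (x s)` and
`p_s(j) ∝ exp (−η s · exp4Lhat θ ℓ η x s j)`, with `x` the sequence of drawn outcomes. -/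
def exp4Lhat {N K : ℕ} (θ : Fin N → Fin K → ℝ) (ℓ : ℕ → Fin K → ℝ) (η : ℕ → ℝ)
    (x : ℕ → Fin K) : ℕ → Fin N → ℝ
  | 0, _ => 0
  | t + 1, i =>
      exp4Lhat θ ℓ η x t i +
        θ i (x t) * ℓ t (x t) /
          ∑ j, (Real.exp (-η t * exp4Lhat θ ℓ η x t j) /
                  ∑ m, Real.exp (-η t * exp4Lhat θ ℓ η x t m)) * θ j (x t)

/-- The exponential-weights distribution over policies played by EXP4 at round `t`. -/
def exp4p {N K : ℕ} (θ : Fin N → Fin K → ℝ) (ℓ : ℕ → Fin K → ℝ) (η : ℕ → ℝ)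
    (x : ℕ → Fin K) (t : ℕ) (i : Fin N) : ℝ :=
  Real.exp (-η t * exp4Lhat θ ℓ η x t i) /
    ∑ m, Real.exp (-η t * exp4Lhat θ ℓ η x t m)

/-- The mixture distribution over outcomes induced by EXP4 at round `t`. -/
def exp4mix {N K : ℕ} (θ : Fin N → Fin K → ℝ) (ℓ : ℕ → Fin K → ℝ) (η : ℕ → ℝ)
    (x : ℕ → Fin K) (t : ℕ) (a : Fin K) : ℝ :=
  ∑ i, exp4p θ ℓ η x t i * θ i a

/-- Extension of a finite outcome sequence to an infinite one. -/
def extSeq {K T : ℕ} [NeZero K] (xs : Fin T → Fin K) (n : ℕ) : Fin K :=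
  if h : n < T then xs ⟨n, h⟩ else default

set_option linter.unusedSectionVars false
set_option linter.unusedVariables false
set_option linter.unnecessarySimpa false
set_option maxHeartbeats 1000000

namespace Exp4Aux

variable {N K : ℕ} [NeZero N] (θ : Fin N → Fin K → ℝ) (ℓ : ℕ → Fin K → ℝ) (η : ℕ → ℝ)
  (x : ℕ → Fin K)

/-- importance weighted loss estimate at round t -/
def lhat (t : ℕ) (i : Fin N) : ℝ :=
  θ i (x t) * ℓ t (x t) / exp4mix θ ℓ η x t (x t)

lemma Lhat_succ (t : ℕ) (i : Fin N) :
    exp4Lhat θ ℓ η x (t + 1) i = exp4Lhat θ ℓ η x t i + lhat θ ℓ η x t i := by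
  simp [exp4Lhat, lhat, exp4mix, exp4p]

lemma sumExp_pos (t : ℕ) :
    0 < ∑ m, Real.exp (-η t * exp4Lhat θ ℓ η x t m) :=
  Finset.sum_pos (fun m _ => Real.exp_pos _) univ_nonempty

lemma p_nonneg (t : ℕ) (i : Fin N) : 0 ≤ exp4p θ ℓ η x t i :=
  div_nonneg (Real.exp_pos _).le (sumExp_pos θ ℓ η x t).le

lemma p_sum_one (t : ℕ) : ∑ i, exp4p θ ℓ η x t i = 1 := by
  simp only [exp4p]
  rw [← Finset.sum_div]
  exact div_self (sumExp_pos θ ℓ η x t).ne'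


lemma mix_nonneg (hθ0 : ∀ i a, 0 ≤ θ i a) (t : ℕ) (a : Fin K) :
    0 ≤ exp4mix θ ℓ η x t a :=
  Finset.sum_nonneg fun i _ => mul_nonneg (p_nonneg θ ℓ η x t i) (hθ0 i a)

lemma mix_sum_one (hθ1 : ∀ i, ∑ a, θ i a = 1) (t : ℕ) :
    ∑ a, exp4mix θ ℓ η x t a = 1 := by
  simp only [exp4mix]
  rw [Finset.sum_comm]
  have : ∀ i, ∑ a, exp4p θ ℓ η x t i * θ i a = exp4p θ ℓ η x t i := by
    intro i
    rw [← Finset.mul_sum, hθ1 i, mul_one]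
  simp only [this]
  exact p_sum_one θ ℓ η x t

lemma lhat_nonneg (hθ0 : ∀ i a, 0 ≤ θ i a) (hℓ : ∀ t a, 0 ≤ ℓ t a ∧ ℓ t a ≤ 1)
    (t : ℕ) (i : Fin N) : 0 ≤ lhat θ ℓ η x t i :=
  div_nonneg (mul_nonneg (hθ0 _ _) (hℓ t _).1) (mix_nonneg θ ℓ η x hθ0 t _)

/-- prefix dependence -/
lemma Lhat_prefix (y : ℕ → Fin K) : ∀ (t : ℕ), (∀ s < t, x s = y s) →
    ∀ i, exp4Lhat θ ℓ η x t i = exp4Lhat θ ℓ η y t i := by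
  intro t
  induction t with
  | zero => intro _ i; simp [exp4Lhat]
  | succ t ih =>
    intro h i
    have hx : ∀ s < t, x s = y s := fun s hs => h s (Nat.lt_succ_of_lt hs)
    have hL : ∀ j, exp4Lhat θ ℓ η x t j = exp4Lhat θ ℓ η y t j := ih hx
    have hxt : x t = y t := h t (Nat.lt_succ_self t)
    show exp4Lhat θ ℓ η x t i + _ = exp4Lhat θ ℓ η y t i + _
    rw [hL i, hxt]
    congr 1
    simp only [hL]


lemma p_prefix (y : ℕ → Fin K) (t : ℕ) (h : ∀ s < t, x s = y s) (i : Fin N) :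
    exp4p θ ℓ η x t i = exp4p θ ℓ η y t i := by
  simp only [exp4p, Lhat_prefix θ ℓ η x y t h]

lemma mix_prefix (y : ℕ → Fin K) (t : ℕ) (h : ∀ s < t, x s = y s) (a : Fin K) :
    exp4mix θ ℓ η x t a = exp4mix θ ℓ η y t a := by
  simp only [exp4mix]
  exact Finset.sum_congr rfl fun i _ => by rw [p_prefix θ ℓ η x y t h i]

/-- the quadratic bound on exp -/
lemma exp_quad {z : ℝ} (hz : -1 ≤ z) : Real.exp (-z) ≤ 1 - z + (3/4) * z ^ 2 := by
  rcases le_total z 1 with h1 | h1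
  · have habs : |(-z)| ≤ 1 := by rw [abs_le]; constructor <;> nlinarith
    have hb := Real.exp_bound habs (n := 2) (by norm_num)
    have hsum : ∑ m ∈ Finset.range 2, (-z) ^ m / (m.factorial : ℝ) = 1 + -z := by
      simp [Finset.sum_range_succ]
    rw [hsum] at hb
    have h2 : |Real.exp (-z) - (1 + -z)| ≤ z ^ 2 * (3 / 4) := by
      calc |Real.exp (-z) - (1 + -z)| ≤ |(-z)| ^ 2 * ((2+1 : ℝ) / ((2:ℕ).factorial * 2)) := by
            exact_mod_cast hb
        _ = z ^ 2 * (3/4) := by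
            rw [abs_neg, sq_abs]; norm_num [Nat.factorial]
    have := abs_le.1 h2
    nlinarith [this.2]
  · have hm : Real.exp (-z) ≤ Real.exp (-1) := Real.exp_le_exp.2 (by linarith)
    have he : Real.exp (-1) < 3/4 := by
      rw [Real.exp_neg]
      rw [inv_lt_iff_one_lt_mul₀ (Real.exp_pos 1)]
      nlinarith [Real.exp_one_gt_d9]
    nlinarith


/-- conditional expected estimate loss of the algorithm -/
def A (t : ℕ) : ℝ := ∑ i, exp4p θ ℓ η x t i * lhat θ ℓ η x t i

def bshift (t : ℕ) : ℝ := if exp4mix θ ℓ η x t (x t) = 0 then 0 else ℓ t (x t)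

def S (t : ℕ) : ℝ := ∑ i, exp4p θ ℓ η x t i * (lhat θ ℓ η x t i - bshift θ ℓ η x t) ^ 2

def Phi (t : ℕ) (a : ℝ) : ℝ :=
  Real.log (∑ i, Real.exp (-a * exp4Lhat θ ℓ η x t i)) / a

lemma estep (hθ0 : ∀ i a, 0 ≤ θ i a) (hℓ : ∀ t a, 0 ≤ ℓ t a ∧ ℓ t a ≤ 1) (t : ℕ)
    (hη0 : 0 ≤ η t) (hη1 : η t ≤ 1) :
    Real.log (∑ i, exp4p θ ℓ η x t i * Real.exp (-η t * lhat θ ℓ η x t i)) ≤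
      -η t * A θ ℓ η x t + (3/4) * η t ^ 2 * S θ ℓ η x t := by
  set c := bshift θ ℓ η x t with hc
  have hc0 : 0 ≤ c := by
    rw [hc, bshift]; split
    · exact le_rfl
    · exact (hℓ t _).1
  have hc1 : c ≤ 1 := by
    rw [hc, bshift]; split
    · norm_num
    · exact (hℓ t _).2
  have hln : ∀ i, 0 ≤ lhat θ ℓ η x t i := lhat_nonneg θ ℓ η x hθ0 hℓ t
  have hquad : ∀ i, Real.exp (-(η t * (lhat θ ℓ η x t i - c))) ≤
      1 - η t * (lhat θ ℓ η x t i - c) + (3/4) * (η t * (lhat θ ℓ η x t i - c)) ^ 2 := by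
    intro i
    have h1 : -1 ≤ η t * (lhat θ ℓ η x t i - c) := by nlinarith [hln i]
    exact exp_quad h1
  have hpos : ∀ i, (0:ℝ) < exp4p θ ℓ η x t i := fun i =>
    div_pos (Real.exp_pos _) (sumExp_pos θ ℓ η x t)
  have hsum1 := p_sum_one θ ℓ η x t
  have hmid : ∑ i, exp4p θ ℓ η x t i * (1 - η t * (lhat θ ℓ η x t i - c) +
      (3/4) * (η t * (lhat θ ℓ η x t i - c)) ^ 2) =
      1 - η t * (A θ ℓ η x t - c) + (3/4) * η t ^ 2 * S θ ℓ η x t := by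
    have expand : ∀ i : Fin N, exp4p θ ℓ η x t i * (1 - η t * (lhat θ ℓ η x t i - c) +
        (3/4) * (η t * (lhat θ ℓ η x t i - c)) ^ 2) =
        exp4p θ ℓ η x t i - η t * (exp4p θ ℓ η x t i * lhat θ ℓ η x t i)
          + (η t * c) * exp4p θ ℓ η x t i
          + (3/4) * η t ^ 2 * (exp4p θ ℓ η x t i * (lhat θ ℓ η x t i - c) ^ 2) := by
      intro i; ring
    rw [Finset.sum_congr rfl fun i _ => expand i]
    simp only [Finset.sum_add_distrib, Finset.sum_sub_distrib, ← Finset.mul_sum, hsum1]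
    simp only [A, S]
    ring
  have key : ∑ i, exp4p θ ℓ η x t i * Real.exp (-(η t * (lhat θ ℓ η x t i - c))) ≤
      1 - η t * (A θ ℓ η x t - c) + (3/4) * η t ^ 2 * S θ ℓ η x t := by
    rw [← hmid]
    exact Finset.sum_le_sum fun i _ => mul_le_mul_of_nonneg_left (hquad i) (hpos i).le
  have hsplit : ∀ i, Real.exp (-η t * lhat θ ℓ η x t i) =
      Real.exp (-(η t * c)) * Real.exp (-(η t * (lhat θ ℓ η x t i - c))) := by
    intro i; rw [← Real.exp_add]; ring_nf
  have hfact : ∑ i, exp4p θ ℓ η x t i * Real.exp (-η t * lhat θ ℓ η x t i) =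
      Real.exp (-(η t * c)) *
        ∑ i, exp4p θ ℓ η x t i * Real.exp (-(η t * (lhat θ ℓ η x t i - c))) := by
    rw [Finset.mul_sum]
    exact Finset.sum_congr rfl fun i _ => by rw [hsplit i]; ring
  have hspos : 0 < ∑ i, exp4p θ ℓ η x t i * Real.exp (-(η t * (lhat θ ℓ η x t i - c))) :=
    Finset.sum_pos (fun i _ => mul_pos (hpos i) (Real.exp_pos _)) univ_nonempty
  have hrpos : 0 < 1 - η t * (A θ ℓ η x t - c) + (3/4) * η t ^ 2 * S θ ℓ η x t :=
    lt_of_lt_of_le hspos key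
  calc Real.log (∑ i, exp4p θ ℓ η x t i * Real.exp (-η t * lhat θ ℓ η x t i))
      = -(η t * c) + Real.log (∑ i, exp4p θ ℓ η x t i *
          Real.exp (-(η t * (lhat θ ℓ η x t i - c)))) := by
        rw [hfact, Real.log_mul (Real.exp_pos _).ne' hspos.ne', Real.log_exp]
    _ ≤ -(η t * c) + Real.log (1 - η t * (A θ ℓ η x t - c) + (3/4) * η t ^ 2 * S θ ℓ η x t) := by
        have := Real.log_le_log hspos key
        linarith
    _ ≤ -(η t * c) + (1 - η t * (A θ ℓ η x t - c) + (3/4) * η t ^ 2 * S θ ℓ η x t - 1) := by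
        have := Real.log_le_sub_one_of_pos hrpos
        linarith
    _ = -η t * A θ ℓ η x t + (3/4) * η t ^ 2 * S θ ℓ η x t := by ring


lemma phi_rec (hθ0 : ∀ i a, 0 ≤ θ i a) (hℓ : ∀ t a, 0 ≤ ℓ t a ∧ ℓ t a ≤ 1) (t : ℕ)
    (hη0 : 0 < η t) (hη1 : η t ≤ 1) :
    Phi θ ℓ η x (t + 1) (η t) ≤
      Phi θ ℓ η x t (η t) - A θ ℓ η x t + (3/4) * η t * S θ ℓ η x t := by
  have hP := sumExp_pos θ ℓ η x t
  have hinnerpos : 0 < ∑ i, exp4p θ ℓ η x t i * Real.exp (-η t * lhat θ ℓ η x t i) :=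
    Finset.sum_pos (fun i _ => mul_pos (div_pos (Real.exp_pos _) hP) (Real.exp_pos _))
      univ_nonempty
  have hfact : ∑ i, Real.exp (-η t * exp4Lhat θ ℓ η x (t+1) i) =
      (∑ m, Real.exp (-η t * exp4Lhat θ ℓ η x t m)) *
        ∑ i, exp4p θ ℓ η x t i * Real.exp (-η t * lhat θ ℓ η x t i) := by
    rw [Finset.mul_sum]
    refine Finset.sum_congr rfl fun i _ => ?_
    rw [Lhat_succ, exp4p]
    rw [show -η t * (exp4Lhat θ ℓ η x t i + lhat θ ℓ η x t i) =
        (-η t * exp4Lhat θ ℓ η x t i) + (-η t * lhat θ ℓ η x t i) by ring, Real.exp_add]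
    field_simp
  have hlog : Real.log (∑ i, Real.exp (-η t * exp4Lhat θ ℓ η x (t+1) i)) =
      Real.log (∑ m, Real.exp (-η t * exp4Lhat θ ℓ η x t m)) +
      Real.log (∑ i, exp4p θ ℓ η x t i * Real.exp (-η t * lhat θ ℓ η x t i)) := by
    rw [hfact, Real.log_mul hP.ne' hinnerpos.ne']
  have hest := estep θ ℓ η x hθ0 hℓ t hη0.le hη1
  simp only [Phi]
  rw [hlog, add_div]
  have : Real.log (∑ i, exp4p θ ℓ η x t i * Real.exp (-η t * lhat θ ℓ η x t i)) / η t ≤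
      -A θ ℓ η x t + (3/4) * η t * S θ ℓ η x t := by
    rw [div_le_iff₀ hη0]
    calc Real.log (∑ i, exp4p θ ℓ η x t i * Real.exp (-η t * lhat θ ℓ η x t i)) ≤
        -η t * A θ ℓ η x t + (3/4) * η t ^ 2 * S θ ℓ η x t := hest
      _ = (-A θ ℓ η x t + (3/4) * η t * S θ ℓ η x t) * η t := by ring
  linarith

lemma phi_mono (t : ℕ) {a b : ℝ} (ha : 0 < a) (hab : a ≤ b) :
    Phi θ ℓ η x t a - Real.log N / a ≤ Phi θ ℓ η x t b - Real.log N / b := by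
  have hb : 0 < b := lt_of_lt_of_le ha hab
  have hN : (0:ℝ) < N := by
    exact_mod_cast Nat.pos_of_ne_zero (NeZero.ne N)
  set L : Fin N → ℝ := exp4Lhat θ ℓ η x t with hL
  have hPa : 0 < ∑ i, Real.exp (-a * L i) :=
    Finset.sum_pos (fun i _ => Real.exp_pos _) univ_nonempty
  have hPb : 0 < ∑ i, Real.exp (-b * L i) :=
    Finset.sum_pos (fun i _ => Real.exp_pos _) univ_nonempty
  have hpow := Real.rpow_arith_mean_le_arith_mean_rpow univ (fun _ : Fin N => 1 / (N:ℝ))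
    (fun i => Real.exp (-a * L i)) (fun i _ => by positivity)
    (by rw [Finset.sum_const, Finset.card_univ, Fintype.card_fin, nsmul_eq_mul]; field_simp)
    (fun i _ => (Real.exp_pos _).le) (p := b / a) ((one_le_div ha).2 hab)
  have hz : ∀ i : Fin N, Real.exp (-a * L i) ^ (b / a) = Real.exp (-b * L i) := by
    intro i
    rw [← Real.exp_mul]
    congr 1
    field_simp
  simp only [hz] at hpow
  have hlhs : ∑ i, (1 / (N:ℝ)) * Real.exp (-a * L i) = (∑ i, Real.exp (-a * L i)) / N := by
    rw [← Finset.mul_sum]; ring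
  have hrhs : ∑ i, (1 / (N:ℝ)) * Real.exp (-b * L i) = (∑ i, Real.exp (-b * L i)) / N := by
    rw [← Finset.mul_sum]; ring
  rw [hlhs, hrhs] at hpow
  have hdivpos : 0 < (∑ i, Real.exp (-a * L i)) / N := div_pos hPa hN
  have hlog : (b / a) * Real.log ((∑ i, Real.exp (-a * L i)) / N) ≤
      Real.log ((∑ i, Real.exp (-b * L i)) / N) := by
    rw [← Real.log_rpow hdivpos]
    exact Real.log_le_log (Real.rpow_pos_of_pos hdivpos _) hpow
  rw [Real.log_div hPa.ne' hN.ne', Real.log_div hPb.ne' hN.ne'] at hlog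
  have : (Real.log (∑ i, Real.exp (-a * L i)) - Real.log N) / a ≤
      (Real.log (∑ i, Real.exp (-b * L i)) - Real.log N) / b := by
    rw [div_le_div_iff₀ ha hb]
    calc (Real.log (∑ i, Real.exp (-a * L i)) - Real.log N) * b
        = a * ((b / a) * (Real.log (∑ i, Real.exp (-a * L i)) - Real.log N)) := by
          field_simp
      _ ≤ a * (Real.log (∑ i, Real.exp (-b * L i)) - Real.log N) :=
          mul_le_mul_of_nonneg_left hlog ha.le
      _ = (Real.log (∑ i, Real.exp (-b * L i)) - Real.log N) * a := by ring
  simp only [Phi, ← hL]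
  calc Real.log (∑ i, Real.exp (-a * L i)) / a - Real.log N / a
      = (Real.log (∑ i, Real.exp (-a * L i)) - Real.log N) / a := by ring
    _ ≤ (Real.log (∑ i, Real.exp (-b * L i)) - Real.log N) / b := this
    _ = Real.log (∑ i, Real.exp (-b * L i)) / b - Real.log N / b := by ring


lemma star (hθ0 : ∀ i a, 0 ≤ θ i a) (hℓ : ∀ t a, 0 ≤ ℓ t a ∧ ℓ t a ≤ 1)
    (hηpos : ∀ t, 0 < η t) (hη1 : ∀ t, η t ≤ 1) (hηmono : ∀ t, η (t+1) ≤ η t) :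
    ∀ T : ℕ, Phi θ ℓ η x T (η T) ≤ Real.log N / η T
      - ∑ t ∈ Finset.range T, A θ ℓ η x t
      + (3/4) * ∑ t ∈ Finset.range T, η t * S θ ℓ η x t := by
  intro T
  induction T with
  | zero =>
    simp only [Finset.range_zero, Finset.sum_empty, Phi]
    have : ∀ i : Fin N, exp4Lhat θ ℓ η x 0 i = 0 := fun i => rfl
    simp [this]
  | succ T ih =>
    have h1 : Phi θ ℓ η x (T+1) (η (T+1)) ≤ Phi θ ℓ η x (T+1) (η T)
        + Real.log N / η (T+1) - Real.log N / η T := by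
      have := phi_mono θ ℓ η x (T+1) (hηpos (T+1)) (hηmono T)
      linarith
    have h2 := phi_rec θ ℓ η x hθ0 hℓ T (hηpos T) (hη1 T)
    rw [Finset.sum_range_succ, Finset.sum_range_succ]
    linarith

lemma star' (hθ0 : ∀ i a, 0 ≤ θ i a) (hℓ : ∀ t a, 0 ≤ ℓ t a ∧ ℓ t a ≤ 1)
    (hηpos : ∀ t, 0 < η t) (hη1 : ∀ t, η t ≤ 1) (hηmono : ∀ t, η (t+1) ≤ η t)
    (T : ℕ) (i : Fin N) :
    ∑ t ∈ Finset.range T, A θ ℓ η x t ≤ exp4Lhat θ ℓ η x T i + Real.log N / η T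
      + (3/4) * ∑ t ∈ Finset.range T, η t * S θ ℓ η x t := by
  have hstar := star θ ℓ η x hθ0 hℓ hηpos hη1 hηmono T
  have hlb : -exp4Lhat θ ℓ η x T i ≤ Phi θ ℓ η x T (η T) := by
    have h1 : Real.exp (-η T * exp4Lhat θ ℓ η x T i) ≤
        ∑ m, Real.exp (-η T * exp4Lhat θ ℓ η x T m) :=
      Finset.single_le_sum (f := fun m => Real.exp (-η T * exp4Lhat θ ℓ η x T m))
        (fun m _ => (Real.exp_pos _).le) (Finset.mem_univ i)
    have h2 : -η T * exp4Lhat θ ℓ η x T i ≤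
        Real.log (∑ m, Real.exp (-η T * exp4Lhat θ ℓ η x T m)) := by
      rw [← Real.log_exp (-η T * exp4Lhat θ ℓ η x T i)]
      exact Real.log_le_log (Real.exp_pos _) h1
    rw [Phi, le_div_iff₀ (hηpos T)]
    calc -exp4Lhat θ ℓ η x T i * η T = -η T * exp4Lhat θ ℓ η x T i := by ring
      _ ≤ _ := h2
  linarith


section Expectation

variable [NeZero K]

def W (T : ℕ) (xs : Fin T → Fin K) : ℝ :=
  ∏ t : Fin T, exp4mix θ ℓ η (extSeq xs) t (xs t)

def snocEquiv (T : ℕ) : ((Fin T → Fin K) × Fin K) ≃ (Fin (T+1) → Fin K) where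
  toFun p := Fin.snoc p.1 p.2
  invFun f := (Fin.init f, f (Fin.last T))
  left_inv p := by simp
  right_inv f := by simp

lemma sum_snoc {T : ℕ} (f : (Fin (T+1) → Fin K) → ℝ) :
    ∑ xs, f xs = ∑ ys : Fin T → Fin K, ∑ a, f (Fin.snoc ys a) := by
  rw [← Equiv.sum_comp (snocEquiv (K := K) T) f, Fintype.sum_prod_type]
  rfl

lemma extSeq_snoc_lt {T : ℕ} (ys : Fin T → Fin K) (a : Fin K) {s : ℕ} (hs : s < T) :
    extSeq (Fin.snoc ys a) s = extSeq ys s := by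
  have hs' : s < T + 1 := Nat.lt_succ_of_lt hs
  simp only [extSeq, dif_pos hs, dif_pos hs']
  have : (⟨s, hs'⟩ : Fin (T+1)) = Fin.castSucc ⟨s, hs⟩ := rfl
  rw [this, Fin.snoc_castSucc]

lemma extSeq_snoc_last {T : ℕ} (ys : Fin T → Fin K) (a : Fin K) :
    extSeq (Fin.snoc ys a) T = a := by
  have hs' : T < T + 1 := Nat.lt_succ_self T
  simp only [extSeq, dif_pos hs']
  have : (⟨T, hs'⟩ : Fin (T+1)) = Fin.last T := rfl
  rw [this, Fin.snoc_last]

lemma extSeq_prefix {T : ℕ} (ys : Fin T → Fin K) (a : Fin K) {t : ℕ} (ht : t ≤ T) :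
    ∀ s < t, extSeq (Fin.snoc ys a) s = extSeq ys s :=
  fun s hs => extSeq_snoc_lt ys a (lt_of_lt_of_le hs ht)

lemma W_succ {T : ℕ} (ys : Fin T → Fin K) (a : Fin K) :
    W θ ℓ η (T+1) (Fin.snoc ys a) = W θ ℓ η T ys * exp4mix θ ℓ η (extSeq ys) T a := by
  simp only [W]
  rw [Fin.prod_univ_castSucc]
  congr 1
  · refine Finset.prod_congr rfl fun t _ => ?_
    rw [Fin.snoc_castSucc]
    have hcast : ((Fin.castSucc t : Fin (T+1)) : ℕ) = (t : ℕ) := rfl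
    rw [hcast]
    exact mix_prefix θ ℓ η _ _ t (extSeq_prefix ys a (le_of_lt t.isLt)) (ys t)
  · rw [Fin.snoc_last]
    have hcast : ((Fin.last T : Fin (T+1)) : ℕ) = T := rfl
    rw [hcast]
    exact mix_prefix θ ℓ η _ _ T (extSeq_prefix ys a le_rfl) a

lemma W_nonneg (hθ0 : ∀ i a, 0 ≤ θ i a) (T : ℕ) (xs : Fin T → Fin K) :
    0 ≤ W θ ℓ η T xs :=
  Finset.prod_nonneg fun t _ => mix_nonneg θ ℓ η _ hθ0 _ _

lemma W_sum_one (hθ1 : ∀ i, ∑ a, θ i a = 1) (T : ℕ) :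
    ∑ xs : Fin T → Fin K, W θ ℓ η T xs = 1 := by
  induction T with
  | zero => simp [W]
  | succ T ih =>
    rw [sum_snoc (fun xs => W θ ℓ η (T+1) xs)]
    calc ∑ ys : Fin T → Fin K, ∑ a, W θ ℓ η (T+1) (Fin.snoc ys a)
        = ∑ ys : Fin T → Fin K, W θ ℓ η T ys * ∑ a, exp4mix θ ℓ η (extSeq ys) T a := by
          refine Finset.sum_congr rfl fun ys _ => ?_
          rw [Finset.mul_sum]
          exact Finset.sum_congr rfl fun a _ => W_succ θ ℓ η ys a
      _ = 1 := by
          simp only [mix_sum_one θ ℓ η _ hθ1, mul_one, ih]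

/-- The tower rule upper bound. -/
lemma tower (hθ0 : ∀ i a, 0 ≤ θ i a) (hθ1 : ∀ i, ∑ a, θ i a = 1)
    (t : ℕ) (C : ℝ) (f : (ℕ → Fin K) → ℝ)
    (hdep : ∀ x y : ℕ → Fin K, (∀ s < t + 1, x s = y s) → f x = f y)
    (hcond : ∀ x : ℕ → Fin K, ∑ a, exp4mix θ ℓ η x t a * f (Function.update x t a) ≤ C) :
    ∀ T : ℕ, t < T → ∑ xs : Fin T → Fin K, W θ ℓ η T xs * f (extSeq xs) ≤ C := by
  intro T
  induction T with
  | zero => intro h; exact absurd h (Nat.not_lt_zero t)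
  | succ T ih =>
    intro ht
    rw [sum_snoc (fun xs => W θ ℓ η (T+1) xs * f (extSeq xs))]
    rcases Nat.lt_or_ge t T with hlt | hge
    · -- t < T : inner variable integrates out
      have : ∀ ys : Fin T → Fin K, ∑ a, W θ ℓ η (T+1) (Fin.snoc ys a) *
          f (extSeq (Fin.snoc ys a)) = W θ ℓ η T ys * f (extSeq ys) := by
        intro ys
        have hf : ∀ a, f (extSeq (Fin.snoc ys a)) = f (extSeq ys) := fun a =>
          hdep _ _ (extSeq_prefix ys a hlt)
        calc ∑ a, W θ ℓ η (T+1) (Fin.snoc ys a) * f (extSeq (Fin.snoc ys a))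
            = ∑ a, W θ ℓ η T ys * f (extSeq ys) * exp4mix θ ℓ η (extSeq ys) T a := by
              refine Finset.sum_congr rfl fun a _ => ?_
              rw [W_succ θ ℓ η ys a, hf a]; ring
          _ = W θ ℓ η T ys * f (extSeq ys) := by
              rw [← Finset.mul_sum, mix_sum_one θ ℓ η _ hθ1, mul_one]
      rw [Finset.sum_congr rfl fun ys _ => this ys]
      exact ih hlt
    · -- t = T : apply the conditional bound
      have htT : t = T := Nat.le_antisymm (Nat.lt_succ_iff.1 ht) hge
      subst htT
      have hstep : ∀ ys : Fin t → Fin K, ∑ a, W θ ℓ η (t+1) (Fin.snoc ys a) *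
          f (extSeq (Fin.snoc ys a)) ≤ W θ ℓ η t ys * C := by
        intro ys
        have hf : ∀ a, f (extSeq (Fin.snoc ys a)) = f (Function.update (extSeq ys) t a) := by
          intro a
          refine hdep _ _ fun s hs => ?_
          rcases Nat.lt_or_ge s t with hst | hst
          · rw [extSeq_snoc_lt ys a hst, Function.update_of_ne (Nat.ne_of_lt hst)]
          · have hseq : s = t := Nat.le_antisymm (Nat.lt_succ_iff.1 hs) hst
            subst hseq
            rw [extSeq_snoc_last, Function.update_self]
        calc ∑ a, W θ ℓ η (t+1) (Fin.snoc ys a) * f (extSeq (Fin.snoc ys a))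
            = W θ ℓ η t ys * ∑ a, exp4mix θ ℓ η (extSeq ys) t a *
                f (Function.update (extSeq ys) t a) := by
              rw [Finset.mul_sum]
              refine Finset.sum_congr rfl fun a _ => ?_
              rw [W_succ θ ℓ η ys a, hf a]; ring
          _ ≤ W θ ℓ η t ys * C :=
              mul_le_mul_of_nonneg_left (hcond (extSeq ys)) (W_nonneg θ ℓ η hθ0 t ys)
      calc ∑ ys : Fin t → Fin K, ∑ a, W θ ℓ η (t+1) (Fin.snoc ys a) *
            f (extSeq (Fin.snoc ys a))
          ≤ ∑ ys : Fin t → Fin K, W θ ℓ η t ys * C :=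
            Finset.sum_le_sum fun ys _ => hstep ys
        _ = C := by rw [← Finset.sum_mul, W_sum_one θ ℓ η hθ1, one_mul]

end Expectation

def g (t : ℕ) : ℝ := ∑ i, exp4p θ ℓ η x t i * ∑ a, θ i a * ℓ t a

lemma g_eq (t : ℕ) : g θ ℓ η x t = ∑ a, exp4mix θ ℓ η x t a * ℓ t a := by
  simp only [g, exp4mix]
  calc ∑ i, exp4p θ ℓ η x t i * ∑ a, θ i a * ℓ t a
      = ∑ i, ∑ a, exp4p θ ℓ η x t i * θ i a * ℓ t a := by
        simp [Finset.mul_sum, mul_assoc]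
    _ = ∑ a, ∑ i, exp4p θ ℓ η x t i * θ i a * ℓ t a := Finset.sum_comm
    _ = ∑ a, (∑ i, exp4p θ ℓ η x t i * θ i a) * ℓ t a := by
        simp [Finset.sum_mul]

lemma upd_prefix (t : ℕ) (a : Fin K) : ∀ s < t, Function.update x t a s = x s :=
  fun s hs => Function.update_of_ne (Nat.ne_of_lt hs) _ _

lemma upd_p (t : ℕ) (a : Fin K) (i : Fin N) :
    exp4p θ ℓ η (Function.update x t a) t i = exp4p θ ℓ η x t i :=
  p_prefix θ ℓ η _ x t (upd_prefix x t a) i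

lemma upd_mix (t : ℕ) (a b : Fin K) :
    exp4mix θ ℓ η (Function.update x t a) t b = exp4mix θ ℓ η x t b :=
  mix_prefix θ ℓ η _ x t (upd_prefix x t a) b

lemma upd_lhat (t : ℕ) (a : Fin K) (i : Fin N) :
    lhat θ ℓ η (Function.update x t a) t i = θ i a * ℓ t a / exp4mix θ ℓ η x t a := by
  simp only [lhat, Function.update_self, upd_mix]

lemma upd_g (t : ℕ) (a : Fin K) :
    g θ ℓ η (Function.update x t a) t = g θ ℓ η x t := by
  simp only [g, upd_p]

lemma upd_A (t : ℕ) (a : Fin K) :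
    A θ ℓ η (Function.update x t a) t =
      ∑ i, exp4p θ ℓ η x t i * (θ i a * ℓ t a / exp4mix θ ℓ η x t a) := by
  simp only [A, upd_p, upd_lhat]

lemma upd_S (t : ℕ) (a : Fin K) :
    S θ ℓ η (Function.update x t a) t =
      ∑ i, exp4p θ ℓ η x t i * (θ i a * ℓ t a / exp4mix θ ℓ η x t a -
        (if exp4mix θ ℓ η x t a = 0 then 0 else ℓ t a)) ^ 2 := by
  simp only [S, upd_p, upd_lhat, bshift, Function.update_self, upd_mix]

lemma cond_gA (hθ1 : ∀ i, ∑ a, θ i a = 1) (t : ℕ) :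
    ∑ a, exp4mix θ ℓ η x t a *
      (g θ ℓ η (Function.update x t a) t - A θ ℓ η (Function.update x t a) t) = 0 := by
  have condA : ∀ a, exp4mix θ ℓ η x t a * A θ ℓ η (Function.update x t a) t =
      exp4mix θ ℓ η x t a * ℓ t a := by
    intro a
    rw [upd_A]
    rcases eq_or_ne (exp4mix θ ℓ η x t a) 0 with h0 | h0
    · simp [h0]
    · rw [Finset.mul_sum]
      calc ∑ i, exp4mix θ ℓ η x t a * (exp4p θ ℓ η x t i *
            (θ i a * ℓ t a / exp4mix θ ℓ η x t a))
          = ∑ i, exp4p θ ℓ η x t i * θ i a * ℓ t a := by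
            refine Finset.sum_congr rfl fun i _ => ?_
            field_simp
        _ = (∑ i, exp4p θ ℓ η x t i * θ i a) * ℓ t a := by rw [Finset.sum_mul]
        _ = exp4mix θ ℓ η x t a * ℓ t a := by rw [exp4mix]
  simp only [mul_sub, Finset.sum_sub_distrib, upd_g, condA]
  rw [← Finset.sum_mul, mix_sum_one θ ℓ η x hθ1 t, one_mul, g_eq, sub_self]

lemma cond_lhat (hθ0 : ∀ i a, 0 ≤ θ i a) (hℓ : ∀ t a, 0 ≤ ℓ t a ∧ ℓ t a ≤ 1) (t : ℕ) (i : Fin N) :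
    ∑ a, exp4mix θ ℓ η x t a * lhat θ ℓ η (Function.update x t a) t i ≤
      ∑ a, θ i a * ℓ t a := by
  refine Finset.sum_le_sum fun a _ => ?_
  rw [upd_lhat]
  rcases eq_or_ne (exp4mix θ ℓ η x t a) 0 with h0 | h0
  · rw [h0, zero_mul]
    exact mul_nonneg (hθ0 i a) (hℓ t a).1
  · rw [mul_div_cancel₀ _ h0]

lemma cond_S (hθ0 : ∀ i a, 0 ≤ θ i a) (hℓ : ∀ t a, 0 ≤ ℓ t a ∧ ℓ t a ≤ 1) (t : ℕ) :
    ∑ a, exp4mix θ ℓ η x t a * S θ ℓ η (Function.update x t a) t ≤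
      ∑ i, exp4p θ ℓ η x t i *
        ∑ a, exp4mix θ ℓ η x t a * (θ i a / exp4mix θ ℓ η x t a - 1) ^ 2 := by
  have swap : ∑ i, exp4p θ ℓ η x t i *
      ∑ a, exp4mix θ ℓ η x t a * (θ i a / exp4mix θ ℓ η x t a - 1) ^ 2 =
      ∑ a, exp4mix θ ℓ η x t a *
        ∑ i, exp4p θ ℓ η x t i * (θ i a / exp4mix θ ℓ η x t a - 1) ^ 2 := by
    simp only [Finset.mul_sum]
    rw [Finset.sum_comm]
    refine Finset.sum_congr rfl fun a _ => Finset.sum_congr rfl fun i _ => by ring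
  rw [swap]
  refine Finset.sum_le_sum fun a _ => ?_
  rcases eq_or_lt_of_le (mix_nonneg θ ℓ η x hθ0 t a) with h0 | h0
  · rw [← h0, zero_mul, zero_mul]
  · have h0' : exp4mix θ ℓ η x t a ≠ 0 := h0.ne'
    refine mul_le_mul_of_nonneg_left ?_ h0.le
    rw [upd_S]
    simp only [if_neg h0']
    refine Finset.sum_le_sum fun i _ => ?_
    refine mul_le_mul_of_nonneg_left ?_ (p_nonneg θ ℓ η x t i)
    have hkey : θ i a * ℓ t a / exp4mix θ ℓ η x t a - ℓ t a =
        ℓ t a * (θ i a / exp4mix θ ℓ η x t a - 1) := by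
      field_simp
    rw [hkey, mul_pow]
    have hl2 : (ℓ t a) ^ 2 ≤ 1 := by
      have := (hℓ t a).1; have := (hℓ t a).2; nlinarith
    nlinarith [sq_nonneg (θ i a / exp4mix θ ℓ η x t a - 1)]

lemma sum_inv_sqrt : ∀ T : ℕ, ∑ t ∈ Finset.range T, 1 / Real.sqrt (t + 1) ≤ 2 * Real.sqrt T := by
  intro T
  induction T with
  | zero => simp
  | succ T ih =>
    rw [Finset.sum_range_succ]
    have hv : (0:ℝ) < Real.sqrt (T + 1) := Real.sqrt_pos.2 (by positivity)
    have hu : (0:ℝ) ≤ Real.sqrt T := Real.sqrt_nonneg _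
    have hv2 : Real.sqrt ((T:ℝ) + 1) ^ 2 = (T:ℝ) + 1 := Real.sq_sqrt (by positivity)
    have hu2 : Real.sqrt (T:ℝ) ^ 2 = (T:ℝ) := Real.sq_sqrt (by positivity)
    have key : 1 / Real.sqrt ((T:ℝ)+1) ≤ 2 * Real.sqrt ((T:ℝ)+1) - 2 * Real.sqrt (T:ℝ) := by
      rw [div_le_iff₀ hv]
      nlinarith [sq_nonneg (Real.sqrt ((T:ℝ)+1) - Real.sqrt (T:ℝ))]
    push_cast
    push_cast at ih
    linarith

lemma const_bound : Real.sqrt 2 + 3 / (2 * Real.exp 1) ≤ 2 := by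
  have h1 : Real.sqrt 2 ≤ 1.41422 := by
    have : Real.sqrt 2 ≤ Real.sqrt (1.41422 ^ 2) := Real.sqrt_le_sqrt (by norm_num)
    rwa [Real.sqrt_sq (by norm_num)] at this
  have h2 : (2.7182818283:ℝ) < Real.exp 1 := Real.exp_one_gt_d9
  have h3 : 3 / (2 * Real.exp 1) ≤ 3 / (2 * 2.7182818283) := by
    apply div_le_div_of_nonneg_left (by norm_num) (by norm_num)
    nlinarith
  nlinarith

end Exp4Aux

namespace Exp4Aux

section Capacity

variable {N K : ℕ} [NeZero N] (θ : Fin N → Fin K → ℝ)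

def capSet : Set ℝ :=
  {v : ℝ | ∃ τ : Fin N → ℝ, (∀ i, 0 ≤ τ i) ∧ (∑ i, τ i = 1) ∧
      v = ∑ i, τ i * ∑ a, (∑ j, τ j * θ j a) *
            (θ i a / (∑ j, τ j * θ j a) - 1) ^ 2}

lemma capSet_elem_nonneg (hθ0 : ∀ i a, 0 ≤ θ i a) {v : ℝ} (hv : v ∈ capSet θ) : 0 ≤ v := by
  obtain ⟨τ, h0, h1, rfl⟩ := hv
  refine Finset.sum_nonneg fun i _ => mul_nonneg (h0 i) ?_
  refine Finset.sum_nonneg fun a _ => mul_nonneg ?_ (sq_nonneg _)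
  exact Finset.sum_nonneg fun j _ => mul_nonneg (h0 j) (hθ0 j a)

lemma capSet_nonempty : (capSet θ).Nonempty := by
  have hN : ((N:ℝ)) ≠ 0 := Nat.cast_ne_zero.2 (NeZero.ne N)
  refine ⟨_, ⟨fun _ => (N:ℝ)⁻¹, fun i => by positivity, ?_, rfl⟩⟩
  rw [Finset.sum_const, Finset.card_univ, Fintype.card_fin, nsmul_eq_mul]
  field_simp

lemma capSet_bddAbove (hθ0 : ∀ i a, 0 ≤ θ i a) (hθ1 : ∀ i, ∑ a, θ i a = 1) :
    BddAbove (capSet θ) := by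
  refine ⟨2 * N, fun v hv => ?_⟩
  obtain ⟨τ, h0, h1, rfl⟩ := hv
  have hq0 : ∀ a, 0 ≤ ∑ j, τ j * θ j a := fun a =>
    Finset.sum_nonneg fun j _ => mul_nonneg (h0 j) (hθ0 j a)
  have hqsum : ∑ a, ∑ j, τ j * θ j a = 1 := by
    rw [Finset.sum_comm]
    calc ∑ j, ∑ a, τ j * θ j a = ∑ j, τ j * ∑ a, θ j a := by
          simp [Finset.mul_sum]
      _ = 1 := by simp only [hθ1, mul_one, h1]
  have hperi : ∀ i, τ i * ∑ a, (∑ j, τ j * θ j a) *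
      (θ i a / (∑ j, τ j * θ j a) - 1) ^ 2 ≤ 2 := by
    intro i
    rcases eq_or_lt_of_le (h0 i) with hτ | hτ
    · rw [← hτ, zero_mul]; norm_num
    · have hτ1 : τ i ≤ 1 := by
        rw [← h1]
        exact Finset.single_le_sum (fun j _ => h0 j) (Finset.mem_univ i)
      have hstep : ∀ a, (∑ j, τ j * θ j a) * (θ i a / (∑ j, τ j * θ j a) - 1) ^ 2 ≤
          θ i a / τ i + ∑ j, τ j * θ j a := by
        intro a
        set q := ∑ j, τ j * θ j a with hq
        rcases eq_or_lt_of_le (hq0 a) with h0q | h0q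
        · have hqz : q = 0 := by rw [hq, ← h0q]
          rw [hqz, zero_mul]
          have : (0:ℝ) ≤ θ i a / τ i := div_nonneg (hθ0 i a) hτ.le
          linarith
        · have hqθ : τ i * θ i a ≤ q := by
            rw [hq]
            exact Finset.single_le_sum (f := fun j => τ j * θ j a)
              (fun j _ => mul_nonneg (h0 j) (hθ0 j a)) (Finset.mem_univ i)
          have hexp : q * (θ i a / q - 1) ^ 2 = θ i a ^ 2 / q - 2 * θ i a + q := by
            have hqne : q ≠ 0 := h0q.ne'
            field_simp
            ring
          have hbound : θ i a ^ 2 / q ≤ θ i a / τ i := by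
            rcases eq_or_lt_of_le (hθ0 i a) with hθa | hθa
            · rw [← hθa]
              simp
            · have hτθ : 0 < τ i * θ i a := mul_pos hτ hθa
              calc θ i a ^ 2 / q ≤ θ i a ^ 2 / (τ i * θ i a) :=
                    div_le_div_of_nonneg_left (sq_nonneg _) hτθ hqθ
                _ = θ i a / τ i := by field_simp
          nlinarith [hθ0 i a]
      calc τ i * ∑ a, (∑ j, τ j * θ j a) * (θ i a / (∑ j, τ j * θ j a) - 1) ^ 2
          ≤ τ i * ∑ a, (θ i a / τ i + ∑ j, τ j * θ j a) := by
            exact mul_le_mul_of_nonneg_left (Finset.sum_le_sum fun a _ => hstep a) hτ.le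
        _ = τ i * ((∑ a, θ i a) / τ i + 1) := by
            rw [Finset.sum_add_distrib, hqsum, Finset.sum_div]
        _ = ∑ a, θ i a + τ i := by field_simp
        _ ≤ 2 := by rw [hθ1 i]; linarith
  calc ∑ i, τ i * ∑ a, (∑ j, τ j * θ j a) * (θ i a / (∑ j, τ j * θ j a) - 1) ^ 2
      ≤ ∑ _i : Fin N, (2:ℝ) := Finset.sum_le_sum fun i _ => hperi i
    _ = 2 * N := by rw [Finset.sum_const, Finset.card_univ, Fintype.card_fin,
          nsmul_eq_mul]; ring

lemma cap_zero_flat (hθ0 : ∀ i a, 0 ≤ θ i a)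
    (hzero : ∀ v ∈ capSet θ, v ≤ 0) : ∀ i i' a, θ i a = θ i' a := by
  have hN : (0:ℝ) < (N:ℝ) := by exact_mod_cast Nat.pos_of_ne_zero (NeZero.ne N)
  set τ : Fin N → ℝ := fun _ => (N:ℝ)⁻¹ with hτdef
  have hmem : (∑ i, τ i * ∑ a, (∑ j, τ j * θ j a) *
      (θ i a / (∑ j, τ j * θ j a) - 1) ^ 2) ∈ capSet θ := by
    refine ⟨τ, fun i => by positivity, ?_, rfl⟩
    rw [Finset.sum_const, Finset.card_univ, Fintype.card_fin, nsmul_eq_mul]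
    field_simp
  have hnn := capSet_elem_nonneg θ hθ0 hmem
  have h0 : (∑ i, τ i * ∑ a, (∑ j, τ j * θ j a) *
      (θ i a / (∑ j, τ j * θ j a) - 1) ^ 2) = 0 :=
    le_antisymm (hzero _ hmem) hnn
  have hq0 : ∀ a, 0 ≤ ∑ j, τ j * θ j a := fun a =>
    Finset.sum_nonneg fun j _ => mul_nonneg (by positivity) (hθ0 j a)
  have hinner : ∀ i, (∑ a, (∑ j, τ j * θ j a) *
      (θ i a / (∑ j, τ j * θ j a) - 1) ^ 2) = 0 := by
    have := (Finset.sum_eq_zero_iff_of_nonneg (fun i _ => ?_)).1 h0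
    · intro i
      have hi := this i (Finset.mem_univ i)
      have hτpos : (0:ℝ) < τ i := by rw [hτdef]; positivity
      rcases mul_eq_zero.1 hi with h | h
      · exact absurd h hτpos.ne'
      · exact h
    · exact mul_nonneg (by positivity) (Finset.sum_nonneg fun a _ =>
        mul_nonneg (hq0 a) (sq_nonneg _))
  intro i i' a
  have key : ∀ i₀, (∑ j, τ j * θ j a) * (θ i₀ a / (∑ j, τ j * θ j a) - 1) ^ 2 = 0 := by
    intro i₀
    have := (Finset.sum_eq_zero_iff_of_nonneg (fun a _ =>
      mul_nonneg (hq0 a) (sq_nonneg _))).1 (hinner i₀) a (Finset.mem_univ a)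
    exact this
  rcases eq_or_lt_of_le (hq0 a) with hq | hq
  · -- mixture is zero at a : all θ j a = 0
    have : ∀ j, τ j * θ j a = 0 := fun j =>
      (Finset.sum_eq_zero_iff_of_nonneg (fun j _ =>
        mul_nonneg (by positivity) (hθ0 j a))).1 hq.symm j (Finset.mem_univ j)
    have hz : ∀ j : Fin N, θ j a = 0 := by
      intro j
      have hτpos : (0:ℝ) < τ j := by rw [hτdef]; positivity
      rcases mul_eq_zero.1 (this j) with h | h
      · exact absurd h hτpos.ne'
      · exact h
    rw [hz i, hz i']
  · have hval : ∀ i₀ : Fin N, θ i₀ a = ∑ j, τ j * θ j a := by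
      intro i₀
      have := key i₀
      rcases mul_eq_zero.1 this with h | h
      · exact absurd h hq.ne'
      · have := pow_eq_zero_iff (n := 2) (by norm_num) |>.1 h
        have hd : θ i₀ a / (∑ j, τ j * θ j a) = 1 := by linarith
        field_simp at hd
        linarith [hd]
    rw [hval i, hval i']

end Capacity
end Exp4Aux

namespace Exp4Aux

variable {N K : ℕ} [NeZero N] (θ : Fin N → Fin K → ℝ) (ℓ : ℕ → Fin K → ℝ) (η : ℕ → ℝ)
  (x : ℕ → Fin K)

lemma Lhat_eq_sum (T : ℕ) (i : Fin N) :
    exp4Lhat θ ℓ η x T i = ∑ t ∈ Finset.range T, lhat θ ℓ η x t i := by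
  induction T with
  | zero => simp [exp4Lhat]
  | succ T ih => rw [Finset.sum_range_succ, Lhat_succ, ih]

lemma lhat_prefix (y : ℕ → Fin K) (t : ℕ) (h : ∀ s < t + 1, x s = y s) (i : Fin N) :
    lhat θ ℓ η x t i = lhat θ ℓ η y t i := by
  have ht : x t = y t := h t (Nat.lt_succ_self t)
  have h' : ∀ s < t, x s = y s := fun s hs => h s (Nat.lt_succ_of_lt hs)
  simp only [lhat, ht, mix_prefix θ ℓ η x y t h']

lemma g_prefix (y : ℕ → Fin K) (t : ℕ) (h : ∀ s < t, x s = y s) :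
    g θ ℓ η x t = g θ ℓ η y t := by
  simp only [g, p_prefix θ ℓ η x y t h]

lemma A_prefix (y : ℕ → Fin K) (t : ℕ) (h : ∀ s < t + 1, x s = y s) :
    A θ ℓ η x t = A θ ℓ η y t := by
  have h' : ∀ s < t, x s = y s := fun s hs => h s (Nat.lt_succ_of_lt hs)
  simp only [A, p_prefix θ ℓ η x y t h', lhat_prefix θ ℓ η x y t h]

lemma S_prefix (y : ℕ → Fin K) (t : ℕ) (h : ∀ s < t + 1, x s = y s) :
    S θ ℓ η x t = S θ ℓ η y t := by
  have ht : x t = y t := h t (Nat.lt_succ_self t)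
  have h' : ∀ s < t, x s = y s := fun s hs => h s (Nat.lt_succ_of_lt hs)
  simp only [S, bshift, p_prefix θ ℓ η x y t h', lhat_prefix θ ℓ η x y t h, ht,
    mix_prefix θ ℓ η x y t h']

section Eta

variable {C L : ℝ}

lemma final_arith {C L : ℝ} {T : ℕ} (hC : 0 < C) (hL : 0 < L) (hT : 1 ≤ T) :
    L / min 1 (Real.sqrt (L / (Real.exp 1 * C * (T + 1)))) +
      (3/4) * ∑ t ∈ Finset.range T,
        (min 1 (Real.sqrt (L / (Real.exp 1 * C * (t + 1))))) * C ≤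
      2 * max (Real.sqrt (Real.exp 1 * C * T * L)) L := by
  have he : (0:ℝ) < Real.exp 1 := Real.exp_pos 1
  have hT' : (1:ℝ) ≤ (T:ℝ) := by exact_mod_cast hT
  set M := max (Real.sqrt (Real.exp 1 * C * T * L)) L with hM
  have hM1 : L ≤ M := le_max_right _ _
  have hMe : Real.sqrt (Real.exp 1 * C * T * L) ≤ M := le_max_left _ _
  have hM0 : 0 < M := lt_of_lt_of_le hL hM1
  have hsqrt2 : (1:ℝ) ≤ Real.sqrt 2 := by
    rw [show (1:ℝ) = Real.sqrt 1 from (Real.sqrt_one).symm]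
    exact Real.sqrt_le_sqrt (by norm_num)
  -- Part 1 : L / η_T ≤ √2 * M
  have part1 : L / min 1 (Real.sqrt (L / (Real.exp 1 * C * (T + 1)))) ≤ Real.sqrt 2 * M := by
    set s := Real.sqrt (L / (Real.exp 1 * C * (T + 1))) with hs
    have hspos : 0 < s := Real.sqrt_pos.2 (by positivity)
    rcases min_choice (1:ℝ) s with hmin | hmin
    · rw [hmin, div_one]
      nlinarith
    · rw [hmin]
      have hs2 : s ^ 2 = L / (Real.exp 1 * C * (T + 1)) := Real.sq_sqrt (by positivity)
      have hval : L / s = Real.sqrt (Real.exp 1 * C * (T + 1) * L) := by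
        rw [show Real.exp 1 * C * (T + 1) * L = (L / s) ^ 2 by
          rw [div_pow, hs2]; field_simp]
        rw [Real.sqrt_sq (by positivity)]
      rw [hval]
      calc Real.sqrt (Real.exp 1 * C * (T + 1) * L)
          ≤ Real.sqrt (2 * (Real.exp 1 * C * T * L)) := by
            apply Real.sqrt_le_sqrt
            nlinarith [mul_pos (mul_pos he hC) hL]
        _ = Real.sqrt 2 * Real.sqrt (Real.exp 1 * C * T * L) :=
            Real.sqrt_mul (by norm_num) _
        _ ≤ Real.sqrt 2 * M := by nlinarith
  -- Part 2 : second-order term ≤ (3/(2e)) * M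
  have part2 : (3/4) * ∑ t ∈ Finset.range T,
      (min 1 (Real.sqrt (L / (Real.exp 1 * C * (t + 1))))) * C ≤
      3 / (2 * Real.exp 1) * M := by
    have hterm : ∀ t : ℕ, (min 1 (Real.sqrt (L / (Real.exp 1 * C * (t + 1))))) ≤
        Real.sqrt (L / (Real.exp 1 * C)) * (1 / Real.sqrt ((t:ℝ) + 1)) := by
      intro t
      have : Real.sqrt (L / (Real.exp 1 * C * (t + 1))) =
          Real.sqrt (L / (Real.exp 1 * C)) * (1 / Real.sqrt ((t:ℝ) + 1)) := by
        rw [one_div, ← Real.sqrt_inv, ← Real.sqrt_mul (by positivity)]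
        congr 1
        field_simp
      rw [← this]
      exact min_le_right _ _
    have hsum : ∑ t ∈ Finset.range T,
        (min 1 (Real.sqrt (L / (Real.exp 1 * C * (t + 1))))) ≤
        Real.sqrt (L / (Real.exp 1 * C)) * (2 * Real.sqrt T) := by
      calc ∑ t ∈ Finset.range T, (min 1 (Real.sqrt (L / (Real.exp 1 * C * (t + 1)))))
          ≤ ∑ t ∈ Finset.range T, Real.sqrt (L / (Real.exp 1 * C)) * (1 / Real.sqrt ((t:ℝ) + 1)) :=
            Finset.sum_le_sum fun t _ => hterm t
        _ = Real.sqrt (L / (Real.exp 1 * C)) * ∑ t ∈ Finset.range T, 1 / Real.sqrt ((t:ℝ) + 1) := by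
            rw [Finset.mul_sum]
        _ ≤ Real.sqrt (L / (Real.exp 1 * C)) * (2 * Real.sqrt T) := by
            apply mul_le_mul_of_nonneg_left (sum_inv_sqrt T) (Real.sqrt_nonneg _)
    have hkey : Real.exp 1 * (C * (Real.sqrt (L / (Real.exp 1 * C)) * Real.sqrt T)) =
        Real.sqrt (Real.exp 1 * C * T * L) := by
      set E := Real.exp 1 with hE
      have hEpos : 0 < E := he
      have h1 : Real.sqrt (L / (E * C)) ^ 2 = L / (E * C) := Real.sq_sqrt (by positivity)
      have h2 : Real.sqrt (T:ℝ) ^ 2 = (T:ℝ) := Real.sq_sqrt (by positivity)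
      rw [show E * C * (T:ℝ) * L = (E * (C * (Real.sqrt (L / (E * C)) * Real.sqrt T))) ^ 2 by
        rw [mul_pow, mul_pow, mul_pow, h1, h2]
        field_simp]
      rw [Real.sqrt_sq (by positivity)]
    have hCsum : ∑ t ∈ Finset.range T,
        (min 1 (Real.sqrt (L / (Real.exp 1 * C * (t + 1))))) * C ≤
        C * (Real.sqrt (L / (Real.exp 1 * C)) * (2 * Real.sqrt T)) := by
      rw [← Finset.sum_mul]
      calc (∑ t ∈ Finset.range T, (min 1 (Real.sqrt (L / (Real.exp 1 * C * (t + 1)))))) * C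
          ≤ (Real.sqrt (L / (Real.exp 1 * C)) * (2 * Real.sqrt T)) * C :=
            mul_le_mul_of_nonneg_right hsum hC.le
        _ = C * (Real.sqrt (L / (Real.exp 1 * C)) * (2 * Real.sqrt T)) := by ring
    calc (3/4) * ∑ t ∈ Finset.range T,
        (min 1 (Real.sqrt (L / (Real.exp 1 * C * (t + 1))))) * C
        ≤ (3/4) * (C * (Real.sqrt (L / (Real.exp 1 * C)) * (2 * Real.sqrt T))) := by
          nlinarith [hCsum]
      _ = (3/2) * (C * (Real.sqrt (L / (Real.exp 1 * C)) * Real.sqrt T)) := by ring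
      _ = 3 / (2 * Real.exp 1) * Real.sqrt (Real.exp 1 * C * T * L) := by
          rw [← hkey]; field_simp
      _ ≤ 3 / (2 * Real.exp 1) * M := by
          apply mul_le_mul_of_nonneg_left hMe (by positivity)
  have hconst := const_bound
  calc L / min 1 (Real.sqrt (L / (Real.exp 1 * C * (T + 1)))) +
      (3/4) * ∑ t ∈ Finset.range T,
        (min 1 (Real.sqrt (L / (Real.exp 1 * C * (t + 1))))) * C
      ≤ Real.sqrt 2 * M + 3 / (2 * Real.exp 1) * M := by linarith
    _ = (Real.sqrt 2 + 3 / (2 * Real.exp 1)) * M := by ring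
    _ ≤ 2 * M := mul_le_mul_of_nonneg_right hconst hM0.le

end Eta

end Exp4Aux

open Exp4Aux

/-- EXP4 on a fixed policy set of `N` distributions over `K` outcomes, run
with learning rates `η t = min {1, √(log N / (e C(Θ) t))}` (1-indexed `t`), has expected
regret at most `2 max {√(e C(Θ) T log N), log N}` against any sequence of `[0,1]` losses,
where `C(Θ)` is the chi-squared capacity of the policy set. -/
theorem exp4_regret_capacity {N K : ℕ} [NeZero K] [NeZero N] (hN : 2 ≤ N)
    (θ : Fin N → Fin K → ℝ) (hθ0 : ∀ i a, 0 ≤ θ i a) (hθ1 : ∀ i, ∑ a, θ i a = 1)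
    (ℓ : ℕ → Fin K → ℝ) (hℓ : ∀ t a, 0 ≤ ℓ t a ∧ ℓ t a ≤ 1)
    (T : ℕ)
    (Cap : ℝ)
    (hCap : Cap = sSup {v : ℝ | ∃ τ : Fin N → ℝ, (∀ i, 0 ≤ τ i) ∧ (∑ i, τ i = 1) ∧
        v = ∑ i, τ i * ∑ a, (∑ j, τ j * θ j a) *
              (θ i a / (∑ j, τ j * θ j a) - 1) ^ 2})
    (η : ℕ → ℝ)
    (hη : ∀ t : ℕ, η t =
        min 1 (Real.sqrt (Real.log N / (Real.exp 1 * Cap * (t + 1))))) :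
    (∑ xs : Fin T → Fin K,
        (∏ t : Fin T, exp4mix θ ℓ η (extSeq xs) t (xs t)) *
          ∑ t : Fin T, ∑ i, exp4p θ ℓ η (extSeq xs) t i * ∑ a, θ i a * ℓ t a)
      - (univ.inf' univ_nonempty fun i : Fin N => ∑ t : Fin T, ∑ a, θ i a * ℓ t a)
      ≤ 2 * max (Real.sqrt (Real.exp 1 * Cap * T * Real.log N)) (Real.log N) := by
  classical
  have hN1 : (1:ℝ) < (N:ℝ) := by
    have : (1:ℕ) < N := lt_of_lt_of_le one_lt_two hN
    exact_mod_cast this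
  have hlogN : 0 < Real.log N := Real.log_pos hN1
  have hbdd : BddAbove (capSet θ) := capSet_bddAbove θ hθ0 hθ1
  have hCapS : Cap = sSup (capSet θ) := hCap
  have hCap0 : 0 ≤ Cap := by
    obtain ⟨v, hv⟩ := capSet_nonempty θ
    rw [hCapS]
    exact le_trans (capSet_elem_nonneg θ hθ0 hv) (le_csSup hbdd hv)
  obtain ⟨i0, -, hinf⟩ := Finset.exists_mem_eq_inf' (univ_nonempty)
    (fun i : Fin N => ∑ t : Fin T, ∑ a, θ i a * ℓ t a)
  rw [hinf]
  have hRHS0 : 0 ≤ 2 * max (Real.sqrt (Real.exp 1 * Cap * T * Real.log N)) (Real.log N) := by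
    have := le_max_right (Real.sqrt (Real.exp 1 * Cap * T * Real.log N)) (Real.log N)
    linarith
  have hWdef : ∀ xs : Fin T → Fin K,
      (∏ t : Fin T, exp4mix θ ℓ η (extSeq xs) t (xs t)) = W θ ℓ η T xs := fun xs => rfl
  have hFdef : ∀ xs : Fin T → Fin K,
      (∑ t : Fin T, ∑ i, exp4p θ ℓ η (extSeq xs) t i * ∑ a, θ i a * ℓ t a) =
        ∑ t ∈ Finset.range T, g θ ℓ η (extSeq xs) t :=
    fun xs => Fin.sum_univ_eq_sum_range (fun t => g θ ℓ η (extSeq xs) t) T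
  have hf0 : (∑ t : Fin T, ∑ a, θ i0 a * ℓ t a) =
      ∑ t ∈ Finset.range T, ∑ a, θ i0 a * ℓ t a :=
    Fin.sum_univ_eq_sum_range (fun t => ∑ a, θ i0 a * ℓ t a) T
  simp only [hWdef, hFdef, hf0]
  rcases eq_or_lt_of_le hCap0 with hC0 | hCpos
  · -- degenerate case : all policies coincide
    have hflat : ∀ i i' a, θ i a = θ i' a := by
      refine cap_zero_flat θ hθ0 fun v hv => ?_
      have := le_csSup hbdd hv
      rw [← hCapS] at this
      linarith
    have hgconst : ∀ (x : ℕ → Fin K) (t : ℕ),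
        g θ ℓ η x t = ∑ a, θ i0 a * ℓ t a := by
      intro x t
      have hsame : ∀ i : Fin N, (∑ a, θ i a * ℓ t a) = ∑ a, θ i0 a * ℓ t a := fun i =>
        Finset.sum_congr rfl fun a _ => by rw [hflat i i0 a]
      calc g θ ℓ η x t = ∑ i, exp4p θ ℓ η x t i * ∑ a, θ i0 a * ℓ t a :=
            Finset.sum_congr rfl fun i _ => by rw [hsame i]
        _ = (∑ i, exp4p θ ℓ η x t i) * ∑ a, θ i0 a * ℓ t a := by
            rw [Finset.sum_mul]
        _ = ∑ a, θ i0 a * ℓ t a := by rw [p_sum_one, one_mul]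
    have hES : (∑ xs : Fin T → Fin K, W θ ℓ η T xs *
        ∑ t ∈ Finset.range T, g θ ℓ η (extSeq xs) t) =
        ∑ t ∈ Finset.range T, ∑ a, θ i0 a * ℓ t a := by
      calc (∑ xs : Fin T → Fin K, W θ ℓ η T xs *
          ∑ t ∈ Finset.range T, g θ ℓ η (extSeq xs) t)
          = ∑ xs : Fin T → Fin K, W θ ℓ η T xs *
              ∑ t ∈ Finset.range T, ∑ a, θ i0 a * ℓ t a := by
            refine Finset.sum_congr rfl fun xs _ => ?_
            rw [Finset.sum_congr rfl fun t _ => hgconst (extSeq xs) t]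
        _ = (∑ xs : Fin T → Fin K, W θ ℓ η T xs) *
              ∑ t ∈ Finset.range T, ∑ a, θ i0 a * ℓ t a := by
            rw [Finset.sum_mul]
        _ = ∑ t ∈ Finset.range T, ∑ a, θ i0 a * ℓ t a := by
            rw [W_sum_one θ ℓ η hθ1 T, one_mul]
    rw [hES]
    simpa using hRHS0
  · -- main case
    have hηpos : ∀ t, 0 < η t := fun t => by
      rw [hη t]
      exact lt_min one_pos (Real.sqrt_pos.2 (by positivity))
    have hη1 : ∀ t, η t ≤ 1 := fun t => by rw [hη t]; exact min_le_left _ _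
    have hηmono : ∀ t, η (t+1) ≤ η t := by
      intro t
      rw [hη t, hη (t+1)]
      apply min_le_min le_rfl
      apply Real.sqrt_le_sqrt
      apply div_le_div_of_nonneg_left hlogN.le (by positivity)
      push_cast
      nlinarith [Real.exp_pos 1]
    rcases Nat.eq_zero_or_pos T with hT0 | hT1
    · subst hT0
      simpa using hRHS0
    -- T ≥ 1
    have hE3 : ∀ t, t < T → (∑ xs : Fin T → Fin K, W θ ℓ η T xs *
        (g θ ℓ η (extSeq xs) t - A θ ℓ η (extSeq xs) t)) ≤ 0 := by
      intro t ht
      refine tower θ ℓ η hθ0 hθ1 t 0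
        (fun y => g θ ℓ η y t - A θ ℓ η y t) ?_ ?_ T ht
      · intro x y h
        show g θ ℓ η x t - A θ ℓ η x t = g θ ℓ η y t - A θ ℓ η y t
        rw [g_prefix θ ℓ η x y t (fun s hs => h s (Nat.lt_succ_of_lt hs)),
          A_prefix θ ℓ η x y t h]
      · intro x
        exact le_of_eq (cond_gA θ ℓ η x hθ1 t)
    have hE1 : ∀ t, t < T → (∑ xs : Fin T → Fin K, W θ ℓ η T xs *
        lhat θ ℓ η (extSeq xs) t i0) ≤ ∑ a, θ i0 a * ℓ t a := by
      intro t ht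
      refine tower θ ℓ η hθ0 hθ1 t (∑ a, θ i0 a * ℓ t a)
        (fun y => lhat θ ℓ η y t i0) ?_ ?_ T ht
      · intro x y h
        exact lhat_prefix θ ℓ η x y t h i0
      · intro x
        exact cond_lhat θ ℓ η x hθ0 hℓ t i0
    have hE2 : ∀ t, t < T → (∑ xs : Fin T → Fin K, W θ ℓ η T xs *
        S θ ℓ η (extSeq xs) t) ≤ Cap := by
      intro t ht
      refine tower θ ℓ η hθ0 hθ1 t Cap (fun y => S θ ℓ η y t) ?_ ?_ T ht
      · intro x y h
        exact S_prefix θ ℓ η x y t h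
      · intro x
        refine le_trans (cond_S θ ℓ η x hθ0 hℓ t) ?_
        rw [hCapS]
        refine le_csSup hbdd ?_
        exact ⟨exp4p θ ℓ η x t, p_nonneg θ ℓ η x t, p_sum_one θ ℓ η x t,
          by simp only [exp4mix]⟩
    have hpt : ∀ xs : Fin T → Fin K,
        ∑ t ∈ Finset.range T, g θ ℓ η (extSeq xs) t ≤
          exp4Lhat θ ℓ η (extSeq xs) T i0 + Real.log N / η T
          + (3/4) * ∑ t ∈ Finset.range T, η t * S θ ℓ η (extSeq xs) t
          + ∑ t ∈ Finset.range T, (g θ ℓ η (extSeq xs) t - A θ ℓ η (extSeq xs) t) := by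
      intro xs
      have hstar := star' θ ℓ η (extSeq xs) hθ0 hℓ hηpos hη1 hηmono T i0
      have hsplit : ∑ t ∈ Finset.range T, g θ ℓ η (extSeq xs) t =
          ∑ t ∈ Finset.range T, A θ ℓ η (extSeq xs) t +
          ∑ t ∈ Finset.range T, (g θ ℓ η (extSeq xs) t - A θ ℓ η (extSeq xs) t) := by
        rw [← Finset.sum_add_distrib]
        exact Finset.sum_congr rfl fun t _ => by ring
      linarith
    have hWnn : ∀ xs : Fin T → Fin K, 0 ≤ W θ ℓ η T xs := W_nonneg θ ℓ η hθ0 T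
    -- bound the expectation
    have hmain : (∑ xs : Fin T → Fin K, W θ ℓ η T xs *
        ∑ t ∈ Finset.range T, g θ ℓ η (extSeq xs) t) ≤
        (∑ t ∈ Finset.range T, ∑ a, θ i0 a * ℓ t a) + Real.log N / η T
          + (3/4) * ∑ t ∈ Finset.range T, η t * Cap := by
      have step1 : (∑ xs : Fin T → Fin K, W θ ℓ η T xs *
          ∑ t ∈ Finset.range T, g θ ℓ η (extSeq xs) t) ≤
          ∑ xs : Fin T → Fin K, W θ ℓ η T xs *
            (exp4Lhat θ ℓ η (extSeq xs) T i0 + Real.log N / η T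
            + (3/4) * ∑ t ∈ Finset.range T, η t * S θ ℓ η (extSeq xs) t
            + ∑ t ∈ Finset.range T, (g θ ℓ η (extSeq xs) t - A θ ℓ η (extSeq xs) t)) :=
        Finset.sum_le_sum fun xs _ => mul_le_mul_of_nonneg_left (hpt xs) (hWnn xs)
      have step2 : (∑ xs : Fin T → Fin K, W θ ℓ η T xs *
            (exp4Lhat θ ℓ η (extSeq xs) T i0 + Real.log N / η T
            + (3/4) * ∑ t ∈ Finset.range T, η t * S θ ℓ η (extSeq xs) t
            + ∑ t ∈ Finset.range T, (g θ ℓ η (extSeq xs) t - A θ ℓ η (extSeq xs) t)))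
          = (∑ xs : Fin T → Fin K, W θ ℓ η T xs * exp4Lhat θ ℓ η (extSeq xs) T i0)
            + (∑ xs : Fin T → Fin K, W θ ℓ η T xs * (Real.log N / η T))
            + (∑ xs : Fin T → Fin K, W θ ℓ η T xs *
                ((3/4) * ∑ t ∈ Finset.range T, η t * S θ ℓ η (extSeq xs) t))
            + (∑ xs : Fin T → Fin K, W θ ℓ η T xs *
                ∑ t ∈ Finset.range T, (g θ ℓ η (extSeq xs) t - A θ ℓ η (extSeq xs) t)) := by
        rw [← Finset.sum_add_distrib, ← Finset.sum_add_distrib, ← Finset.sum_add_distrib]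
        exact Finset.sum_congr rfl fun xs _ => by ring
      have B1 : (∑ xs : Fin T → Fin K, W θ ℓ η T xs * exp4Lhat θ ℓ η (extSeq xs) T i0) ≤
          ∑ t ∈ Finset.range T, ∑ a, θ i0 a * ℓ t a := by
        calc (∑ xs : Fin T → Fin K, W θ ℓ η T xs * exp4Lhat θ ℓ η (extSeq xs) T i0)
            = ∑ xs : Fin T → Fin K, ∑ t ∈ Finset.range T,
                W θ ℓ η T xs * lhat θ ℓ η (extSeq xs) t i0 := by
              refine Finset.sum_congr rfl fun xs _ => ?_
              rw [Lhat_eq_sum, Finset.mul_sum]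
          _ = ∑ t ∈ Finset.range T, ∑ xs : Fin T → Fin K,
                W θ ℓ η T xs * lhat θ ℓ η (extSeq xs) t i0 := Finset.sum_comm
          _ ≤ ∑ t ∈ Finset.range T, ∑ a, θ i0 a * ℓ t a :=
              Finset.sum_le_sum fun t ht => hE1 t (Finset.mem_range.1 ht)
      have B2 : (∑ xs : Fin T → Fin K, W θ ℓ η T xs * (Real.log N / η T)) =
          Real.log N / η T := by
        rw [← Finset.sum_mul, W_sum_one θ ℓ η hθ1 T, one_mul]
      have B3 : (∑ xs : Fin T → Fin K, W θ ℓ η T xs *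
          ((3/4) * ∑ t ∈ Finset.range T, η t * S θ ℓ η (extSeq xs) t)) ≤
          (3/4) * ∑ t ∈ Finset.range T, η t * Cap := by
        calc (∑ xs : Fin T → Fin K, W θ ℓ η T xs *
            ((3/4) * ∑ t ∈ Finset.range T, η t * S θ ℓ η (extSeq xs) t))
            = ∑ xs : Fin T → Fin K, ∑ t ∈ Finset.range T,
                (3/4) * (η t * (W θ ℓ η T xs * S θ ℓ η (extSeq xs) t)) := by
              refine Finset.sum_congr rfl fun xs _ => ?_
              rw [Finset.mul_sum, Finset.mul_sum]
              exact Finset.sum_congr rfl fun t _ => by ring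
          _ = ∑ t ∈ Finset.range T, ∑ xs : Fin T → Fin K,
                (3/4) * (η t * (W θ ℓ η T xs * S θ ℓ η (extSeq xs) t)) := Finset.sum_comm
          _ = ∑ t ∈ Finset.range T, (3/4) * (η t *
                ∑ xs : Fin T → Fin K, W θ ℓ η T xs * S θ ℓ η (extSeq xs) t) := by
              refine Finset.sum_congr rfl fun t _ => ?_
              rw [← Finset.mul_sum, ← Finset.mul_sum]
          _ ≤ ∑ t ∈ Finset.range T, (3/4) * (η t * Cap) := by
              refine Finset.sum_le_sum fun t ht => ?_
              have := hE2 t (Finset.mem_range.1 ht)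
              have hη0 := (hηpos t).le
              nlinarith
          _ = (3/4) * ∑ t ∈ Finset.range T, η t * Cap := by
              rw [Finset.mul_sum]
      have B4 : (∑ xs : Fin T → Fin K, W θ ℓ η T xs *
          ∑ t ∈ Finset.range T, (g θ ℓ η (extSeq xs) t - A θ ℓ η (extSeq xs) t)) ≤ 0 := by
        calc (∑ xs : Fin T → Fin K, W θ ℓ η T xs *
            ∑ t ∈ Finset.range T, (g θ ℓ η (extSeq xs) t - A θ ℓ η (extSeq xs) t))
            = ∑ xs : Fin T → Fin K, ∑ t ∈ Finset.range T,
                W θ ℓ η T xs * (g θ ℓ η (extSeq xs) t - A θ ℓ η (extSeq xs) t) := by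
              exact Finset.sum_congr rfl fun xs _ => by rw [Finset.mul_sum]
          _ = ∑ t ∈ Finset.range T, ∑ xs : Fin T → Fin K,
                W θ ℓ η T xs * (g θ ℓ η (extSeq xs) t - A θ ℓ η (extSeq xs) t) :=
              Finset.sum_comm
          _ ≤ ∑ t ∈ Finset.range T, (0:ℝ) :=
              Finset.sum_le_sum fun t ht => hE3 t (Finset.mem_range.1 ht)
          _ = 0 := by simp
      linarith
    -- final arithmetic
    have harp : Real.log N / η T + (3/4) * ∑ t ∈ Finset.range T, η t * Cap ≤
        2 * max (Real.sqrt (Real.exp 1 * Cap * T * Real.log N)) (Real.log N) := by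
      have hsumeq : ∑ t ∈ Finset.range T, η t * Cap =
          ∑ t ∈ Finset.range T,
            (min 1 (Real.sqrt (Real.log N / (Real.exp 1 * Cap * (t + 1))))) * Cap :=
        Finset.sum_congr rfl fun t _ => by rw [hη t]
      rw [hη T, hsumeq]
      exact final_arith hCpos hlogN hT1
    linarith

end
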